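/- Let D be a transitive-free digraph and P a directed path in D. Then any vertex of D not on P has at most 2 neighbors (counting both in-neighbors and out-neighbors) among the vertices of P. -/

import Mathlib

/-- An arc `(x, y)` is a *transitive arc* if there is a directed path from `x` to `y`
avoiding the arc `(x, y)` itself. -/
def IsTransArc {V : Type*} (A : V → V → Prop) (x y : V) : Prop :=
  A x y ∧ ∃ l : List V, l.Nodup ∧
    l.Chain' (fun a b => A a b ∧ ¬(a = x ∧ b = y)) ∧
    l.head? = some x ∧ l.getLast? = some y

/-- A digraph is transitive-free if it has no transitive arc. -/
def TransitiveFree {V : Type*} (A : V → V → Prop) : Prop :=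
  ∀ x y : V, ¬ IsTransArc A x y

private lemma chain'_imp_mem {α : Type*} {R S : α → α → Prop} :
    ∀ {l : List α}, l.Chain' R → (∀ a ∈ l, ∀ b ∈ l, R a b → S a b) → l.Chain' S
  | [], _, _ => List.IsChain.nil
  | [_], _, _ => List.isChain_singleton _
  | a :: b :: l, h, H => by
      unfold List.Chain' at h ⊢; rw [List.isChain_cons_cons] at h ⊢
      exact ⟨H a (by simp) b (by simp) h.1,
        chain'_imp_mem h.2 (fun p hp q hq => H p (by simp [hp]) q
          (by simp only [List.mem_cons] at hq ⊢; tauto))⟩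

/-- There is a directed path list from `v i` to `v j` along the path, for `i ≤ j`. -/
private lemma exists_path_list {V : Type*} {A : V → V → Prop} {t : ℕ} {v : Fin t → V}
    (hinj : Function.Injective v)
    (hpath : ∀ i : Fin t, ∀ h : (i : ℕ) + 1 < t, A (v i) (v ⟨(i : ℕ) + 1, h⟩))
    (i : ℕ) (hi : i < t) :
    ∀ j : ℕ, i ≤ j → ∀ hj : j < t,
      ∃ l : List V, l.Nodup ∧ l.Chain' A ∧ l.head? = some (v ⟨i, hi⟩) ∧
        l.getLast? = some (v ⟨j, hj⟩) ∧
        ∀ u ∈ l, ∃ k : ℕ, ∃ hk : k < t, i ≤ k ∧ k ≤ j ∧ u = v ⟨k, hk⟩ := by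
  intro j hij
  induction j, hij using Nat.le_induction with
  | base =>
      intro hj
      refine ⟨[v ⟨i, hi⟩], by simp, List.isChain_singleton _, by simp, by simp, ?_⟩
      intro u hu
      simp only [List.mem_singleton] at hu
      exact ⟨i, hi, le_refl _, le_refl _, hu⟩
  | succ j hj1 ih =>
      intro hj
      have hjt : j < t := by omega
      obtain ⟨l, hnd, hch, hhd, hlast, hmem⟩ := ih hjt
      have hlne : l ≠ [] := by
        intro h; subst h; simp at hhd
      have hnotmem : v ⟨j + 1, hj⟩ ∉ l := by
        intro hm
        obtain ⟨k, hk, _, hkj, hu⟩ := hmem _ hm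
        have := hinj hu
        simp only [Fin.mk.injEq] at this
        omega
      refine ⟨l ++ [v ⟨j + 1, hj⟩], ?_, ?_, ?_, ?_, ?_⟩
      · simp [List.nodup_append, hnd, hnotmem]; exact fun a ha h => hnotmem (h ▸ ha)
      · refine List.isChain_append.2 ⟨hch, List.isChain_singleton _, ?_⟩
        intro a ha b hb
        rw [hlast] at ha
        simp only [Option.mem_def, Option.some_inj] at ha
        simp only [List.head?_cons, Option.mem_def, Option.some_inj] at hb
        subst ha; subst hb
        exact hpath ⟨j, hjt⟩ hj
      · rw [List.head?_append_of_ne_nil _ hlne] at *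
        exact hhd
      · rw [List.getLast?_append_of_ne_nil _ (by simp)]
        simp
      · intro u hu
        rcases List.mem_append.1 hu with h | h
        · obtain ⟨k, hk, h1, h2, h3⟩ := hmem _ h
          exact ⟨k, hk, h1, by omega, h3⟩
        · simp only [List.mem_singleton] at h
          exact ⟨j + 1, hj, by omega, le_refl _, h⟩

/-- In a transitive-free digraph, any vertex not on a directed path `P` has at most
2 neighbors (in- or out-neighbors) among the vertices of `P`. -/
theorem transitiveFree_offPath_vertex_two_neighbors
    {V : Type*} (A : V → V → Prop) (hTF : TransitiveFree A)
    (t : ℕ) (v : Fin t → V) (hinj : Function.Injective v)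
    (hpath : ∀ i : Fin t, ∀ h : (i : ℕ) + 1 < t, A (v i) (v ⟨(i : ℕ) + 1, h⟩))
    (x : V) (hx : x ∉ Set.range v) :
    {u ∈ Set.range v | A x u ∨ A u x}.ncard ≤ 2 := by
  classical
  set S1 : Set V := {u ∈ Set.range v | A x u} with hS1
  set S2 : Set V := {u ∈ Set.range v | A u x} with hS2
  -- S1 is a subsingleton
  have key1 : ∀ i j : Fin t, A x (v i) → A x (v j) → (i : ℕ) < (j : ℕ) → False := by
    intro i j hAi hAj hij
    obtain ⟨l, hnd, hch, hhd, hlast, hmem⟩ :=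
      exists_path_list hinj hpath i i.isLt j (le_of_lt hij) j.isLt
    have hxl : x ∉ l := by
      intro hm
      obtain ⟨k, hk, _, _, hu⟩ := hmem _ hm
      exact hx ⟨⟨k, hk⟩, hu.symm⟩
    have hlne : l ≠ [] := by intro h; subst h; simp at hhd
    refine hTF x (v j) ⟨hAj, x :: l, ?_, ?_, by simp, ?_⟩
    · simp [hnd, hxl]
    · refine List.isChain_cons.2 ⟨?_, ?_⟩
      · intro y hy
        rw [hhd] at hy
        simp only [Option.mem_def, Option.some_inj] at hy
        subst hy
        refine ⟨by simpa using hAi, ?_⟩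
        rintro ⟨-, h2⟩
        have h3 := congrArg Fin.val (hinj h2)
        simp only [] at h3
        omega
      · refine chain'_imp_mem hch ?_
        intro a ha b _ hab
        refine ⟨hab, ?_⟩
        rintro ⟨h1, -⟩
        obtain ⟨k, hk, _, _, hu⟩ := hmem _ ha
        exact hx ⟨⟨k, hk⟩, (h1 ▸ hu).symm⟩
    · rw [show x :: l = [x] ++ l from rfl, List.getLast?_append_of_ne_nil _ hlne, hlast]
  have key2 : ∀ i j : Fin t, A (v i) x → A (v j) x → (i : ℕ) < (j : ℕ) → False := by
    intro i j hAi hAj hij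
    obtain ⟨l, hnd, hch, hhd, hlast, hmem⟩ :=
      exists_path_list hinj hpath i i.isLt j (le_of_lt hij) j.isLt
    have hxl : x ∉ l := by
      intro hm
      obtain ⟨k, hk, _, _, hu⟩ := hmem _ hm
      exact hx ⟨⟨k, hk⟩, hu.symm⟩
    have hlne : l ≠ [] := by intro h; subst h; simp at hhd
    refine hTF (v i) x ⟨hAi, l ++ [x], ?_, ?_, ?_, by simp⟩
    · simp [List.nodup_append, hnd, hxl]; exact fun a ha h => hxl (h ▸ ha)
    · refine List.isChain_append.2 ⟨?_, List.isChain_singleton _, ?_⟩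
      · refine chain'_imp_mem hch ?_
        intro a _ b hb hab
        refine ⟨hab, ?_⟩
        rintro ⟨-, h2⟩
        obtain ⟨k, hk, _, _, hu⟩ := hmem _ hb
        exact hx ⟨⟨k, hk⟩, (h2 ▸ hu).symm⟩
      · intro a ha b hb
        rw [hlast] at ha
        simp only [Option.mem_def, Option.some_inj] at ha
        simp only [List.head?_cons, Option.mem_def, Option.some_inj] at hb
        subst ha; subst hb
        refine ⟨by simpa using hAj, ?_⟩
        rintro ⟨h1, -⟩
        have h3 := congrArg Fin.val (hinj h1)
        simp only [] at h3
        omega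
    · rw [List.head?_append_of_ne_nil _ hlne, hhd]
  have hsub1 : S1.Subsingleton := by
    rintro u ⟨⟨i, rfl⟩, hAu⟩ w ⟨⟨j, rfl⟩, hAw⟩
    rcases lt_trichotomy (i : ℕ) (j : ℕ) with h | h | h
    · exact absurd (key1 i j hAu hAw h) (by simp)
    · exact congrArg v (Fin.ext h)
    · exact absurd (key1 j i hAw hAu h) (by simp)
  have hsub2 : S2.Subsingleton := by
    rintro u ⟨⟨i, rfl⟩, hAu⟩ w ⟨⟨j, rfl⟩, hAw⟩
    rcases lt_trichotomy (i : ℕ) (j : ℕ) with h | h | h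
    · exact absurd (key2 i j hAu hAw h) (by simp)
    · exact congrArg v (Fin.ext h)
    · exact absurd (key2 j i hAw hAu h) (by simp)
  have hsub : {u ∈ Set.range v | A x u ∨ A u x} ⊆ S1 ∪ S2 := by
    rintro u ⟨hu, h | h⟩
    · exact Or.inl ⟨hu, h⟩
    · exact Or.inr ⟨hu, h⟩
  have hfin : (S1 ∪ S2).Finite := (hsub1.finite).union (hsub2.finite)
  calc {u ∈ Set.range v | A x u ∨ A u x}.ncard ≤ (S1 ∪ S2).ncard :=
        Set.ncard_le_ncard hsub hfin
    _ ≤ S1.ncard + S2.ncard := Set.ncard_union_le _ _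
    _ ≤ 1 + 1 := add_le_add
        ((Set.ncard_le_one hsub1.finite).2 fun a ha b hb => hsub1 ha hb)
        ((Set.ncard_le_one hsub2.finite).2 fun a ha b hb => hsub2 ha hb)
    _ = 2 := rfl
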